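/- For all n ≥ 1, the number of Gessel permutations of size n equals the odd double factorial (2n-1)!! = 1·3·5···(2n-1). -/

import Mathlib

/-- `l` is a permutation (as a sequence) of the multiset `{1,1,2,2,...,n,n}`. -/
def IsDoubleMultiset (n : ℕ) (l : List ℕ) : Prop :=
  ∀ i : ℕ, l.count i = if 1 ≤ i ∧ i ≤ n then 2 else 0

/-- A Stirling permutation of size `n`: a permutation of `{1,1,2,2,...,n,n}`
such that every entry lying strictly between the two (equal) occurrences of a
value exceeds that value. -/
def IsStirlingPerm (n : ℕ) (l : List ℕ) : Prop :=
  IsDoubleMultiset n l ∧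
    ∀ a b c : Fin l.length, a < b → b < c → l.get a = l.get c →
      l.get a < l.get b

/-- A Gessel permutation of size `n`: a permutation of `{1,1,2,2,...,n,n}` in
which the second occurrence of each value is a right-to-left minimum
(equivalently, the second occurrences of `1,2,...,n` appear in that order). -/
def IsGesselPerm (n : ℕ) (l : List ℕ) : Prop :=
  IsDoubleMultiset n l ∧
    ∀ a c d : Fin l.length, a < c → l.get a = l.get c → c < d →
      l.get c < l.get d

open List

/-- Pattern-avoidance form of the Gessel condition. -/
def NoPat (l : List ℕ) : Prop := ∀ x y : ℕ, y ≤ x → ¬ ([x, x, y] <+ l)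

lemma gessel_iff (n : ℕ) (l : List ℕ) :
    IsGesselPerm n l ↔ IsDoubleMultiset n l ∧ NoPat l := by
  constructor
  · rintro ⟨hm, h⟩
    refine ⟨hm, fun x y hyx hsub => ?_⟩
    rw [List.sublist_iff_exists_fin_orderEmbedding_get_eq] at hsub
    obtain ⟨f, hf⟩ := hsub
    have h0 := hf ⟨0, by norm_num⟩
    have h1 := hf ⟨1, by norm_num⟩
    have h2 := hf ⟨2, by norm_num⟩
    simp only [List.get] at h0 h1 h2
    have hlt := h (f ⟨0, by norm_num⟩) (f ⟨1, by norm_num⟩) (f ⟨2, by norm_num⟩)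
      (f.strictMono (by simp [Fin.lt_def])) (by rw [← h0, ← h1])
      (f.strictMono (by simp [Fin.lt_def]))
    rw [← h1, ← h2] at hlt
    omega
  · rintro ⟨hm, h⟩
    refine ⟨hm, fun a c d hac heq hcd => ?_⟩
    by_contra hcon
    push_neg at hcon
    set x := l.get c with hx
    set y := l.get d with hy
    refine h x y hcon ?_
    rw [List.sublist_iff_exists_fin_orderEmbedding_get_eq]
    have hlen : ([x, x, y] : List ℕ).length = 3 := rfl
    refine ⟨OrderEmbedding.ofStrictMono
      (fun i => if (i : ℕ) = 0 then a else if (i : ℕ) = 1 then c else d) ?_, ?_⟩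
    · intro i j hij
      rcases i with ⟨i, hi⟩
      rcases j with ⟨j, hj⟩
      rw [hlen] at hi hj
      simp only [Fin.lt_def] at hij ⊢
      interval_cases i <;> interval_cases j <;> simp_all <;> omega
    · intro ix
      rcases ix with ⟨i, hi⟩
      rw [hlen] at hi
      interval_cases i <;> simp_all [List.get]

lemma noPat_of_append_right {l m : List ℕ} (h : NoPat (l ++ m)) : NoPat l :=
  fun x y hyx hsub => h x y hyx (hsub.trans (l.sublist_append_left m))

lemma noPat_middle {A B : List ℕ} {v : ℕ} (h : NoPat (A ++ v :: B)) : NoPat (A ++ B) :=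
  fun x y hyx hsub => h x y hyx (hsub.trans ((B.sublist_cons_self v).append_left A))

lemma count_one_middle {A B : List ℕ} {v : ℕ} (hA : v ∉ A) (hB : v ∉ B) :
    (A ++ v :: B).count v = 1 := by
  simp [List.count_append, List.count_cons, List.count_eq_zero_of_not_mem hA,
    List.count_eq_zero_of_not_mem hB]

lemma noPat_insert {A B : List ℕ} {v : ℕ} (hv : v ∉ A ++ B)
    (hlt : ∀ x ∈ A ++ B, x < v) (h : NoPat (A ++ B)) :
    NoPat ((A ++ v :: B) ++ [v]) := by
  have hvA : v ∉ A := fun hx => hv (List.mem_append_left _ hx)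
  have hvB : v ∉ B := fun hx => hv (List.mem_append_right _ hx)
  intro x y hyx hsub
  by_cases hxv : x = v
  · subst hxv
    rw [List.sublist_append_iff] at hsub
    obtain ⟨s, t, hst, hs, ht⟩ := hsub
    have hcount : s.count x ≤ 1 := by
      have := hs.count_le x
      rwa [count_one_middle hvA hvB] at this
    have htlen : t.length ≤ 1 := by simpa using ht.length_le
    have hslen : 2 ≤ s.length := by
      have hlen3 := congrArg List.length hst
      simp at hlen3
      omega
    rcases s with _ | ⟨a, s⟩
    · simp at hslen
    rcases s with _ | ⟨b, s⟩
    · simp at hslen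
    simp only [List.cons_append, List.cons.injEq] at hst
    obtain ⟨rfl, rfl, -⟩ := hst
    simp [List.count_cons] at hcount
  · have hx_mem : x ∈ (A ++ v :: B) ++ [v] :=
      hsub.subset (by simp)
    have hx_mem' : x ∈ A ++ B := by
      rcases List.mem_append.mp hx_mem with h1 | h1
      · rcases List.mem_append.mp h1 with h2 | h2
        · exact List.mem_append_left _ h2
        · rcases List.mem_cons.mp h2 with h3 | h3
          · exact absurd h3 hxv
          · exact List.mem_append_right _ h3
      · simp at h1; exact absurd h1 hxv
    by_cases hyv : y = v
    · exact absurd (hlt x hx_mem') (by omega)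
    · -- erase v twice to land in A ++ B
      have h1 : [x, x, y] <+ ((A ++ v :: B) ++ [v]).erase v := by
        have := hsub.erase v
        rwa [List.erase_of_not_mem (by simp [hxv, hyv, Ne.symm])] at this
      rw [List.erase_append_left _ (by simp : v ∈ A ++ v :: B)] at h1
      rw [List.erase_append_right _ hvA, List.erase_cons_head] at h1
      have h2 : [x, x, y] <+ ((A ++ B) ++ [v]).erase v := by
        have := h1.erase v
        rwa [List.erase_of_not_mem (by simp [hxv, hyv, Ne.symm])] at this
      rw [List.erase_append_right _ hv, List.erase_cons_head, List.append_nil] at h2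
      exact h x y hyx h2

lemma length_of_double {n : ℕ} {l : List ℕ} (h : IsDoubleMultiset n l) :
    l.length = 2 * n := by
  have hml : (l : Multiset ℕ) = Multiset.Icc 1 n + Multiset.Icc 1 n := by
    refine Multiset.ext.mpr fun a => ?_
    rw [Multiset.count_add]
    have hcount : Multiset.count a (Multiset.Icc 1 n)
        = if a ∈ Multiset.Icc 1 n then 1 else 0 :=
      Multiset.count_eq_of_nodup (Multiset.nodup_Icc)
    have : Multiset.count a (↑l : Multiset ℕ) = l.count a := by simp
    rw [this, h a, hcount]
    simp only [Multiset.mem_Icc]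
    split_ifs <;> omega
  have : Multiset.card (↑l : Multiset ℕ) = 2 * n := by
    rw [hml, Multiset.card_add]
    have : Multiset.card (Multiset.Icc 1 n) = n + 1 - 1 := by
      show Multiset.card (Finset.Icc 1 n).val = _
      rw [← Finset.card_def, Nat.card_Icc]
    omega
  simpa using this

lemma mem_bound_of_double {n : ℕ} {l : List ℕ} (h : IsDoubleMultiset n l)
    {x : ℕ} (hx : x ∈ l) : 1 ≤ x ∧ x ≤ n := by
  have := h x
  have hpos : 0 < l.count x := List.count_pos_iff.mpr hx
  by_contra hcon
  rw [if_neg hcon] at this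
  omega

/-- Insert `v` at position `p` and append `v` at the end. -/
def insG (v : ℕ) (l : List ℕ) (p : ℕ) : List ℕ :=
  (l.take p ++ v :: l.drop p) ++ [v]

/-- The finset of Gessel permutations, built recursively. -/
def G : ℕ → Finset (List ℕ)
  | 0 => {([] : List ℕ)}
  | n + 1 => (G n).biUnion fun l => (Finset.range (2 * n + 1)).image (insG (n + 1) l)

lemma count_insG (v : ℕ) (l : List ℕ) (p : ℕ) (i : ℕ) :
    (insG v l p).count i = l.count i + if i = v then 2 else 0 := by
  have h1 : (l.take p ++ v :: l.drop p).Perm (v :: l) := by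
    have := List.perm_middle (a := v) (l₁ := l.take p) (l₂ := l.drop p)
    rwa [List.take_append_drop] at this
  have h2 : (insG v l p).Perm (v :: v :: l) :=
    (List.perm_append_singleton v _).trans (h1.cons v)
  rw [h2.count_eq]
  simp [List.count_cons]
  split_ifs <;> omega

lemma middle_split_unique {v : ℕ} : ∀ {A A' B B' : List ℕ}, v ∉ A → v ∉ A' →
    A ++ v :: B = A' ++ v :: B' → A = A' ∧ B = B' := by
  intro A
  induction A with
  | nil =>
    intro A' B B' _ hA' heq
    cases A' with
    | nil => simpa using heq
    | cons a t =>
      simp only [List.nil_append, List.cons_append, List.cons.injEq] at heq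
      exact absurd (heq.1 ▸ List.mem_cons_self (a := a) (l := t)) (heq.1 ▸ hA')
  | cons a A ih =>
    intro A' B B' hA hA' heq
    cases A' with
    | nil =>
      simp only [List.nil_append, List.cons_append, List.cons.injEq] at heq
      exact absurd (heq.1 ▸ List.mem_cons_self (a := a) (l := A)) (heq.1 ▸ hA)
    | cons a' A' =>
      simp only [List.cons_append, List.cons.injEq] at heq
      obtain ⟨rfl, heq⟩ := heq
      obtain ⟨rfl, rfl⟩ := ih (fun h => hA (List.mem_cons_of_mem _ h))
        (fun h => hA' (List.mem_cons_of_mem _ h)) heq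
      exact ⟨rfl, rfl⟩

/-- split-off lemma: a `v ∈ w` decomposes with first occurrence. -/
lemma exists_first_split {v : ℕ} : ∀ {w : List ℕ}, v ∈ w →
    ∃ A B, w = A ++ v :: B ∧ v ∉ A := by
  intro w
  induction w with
  | nil => intro h; simp at h
  | cons a t ih =>
    intro h
    by_cases hav : a = v
    · exact ⟨[], t, by simp [hav], by simp⟩
    · rcases List.mem_cons.mp h with h1 | h1
      · exact absurd h1.symm hav
      · obtain ⟨A, B, hAB, hvA⟩ := ih h1
        exact ⟨a :: A, B, by simp [hAB], by simp [Ne.symm hav, hvA]⟩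

lemma mem_G_iff : ∀ (n : ℕ) (l : List ℕ),
    l ∈ G n ↔ IsDoubleMultiset n l ∧ NoPat l := by
  intro n
  induction n with
  | zero =>
    intro l
    constructor
    · intro h
      have : l = [] := by simpa [G] using h
      subst this
      refine ⟨fun i => by rw [List.count_nil, if_neg (by omega)], fun x y _ hsub => by
        have := hsub.length_le; simp at this⟩
    · rintro ⟨hm, _⟩
      have : l.length = 0 := by simpa using length_of_double hm
      simp [G, List.length_eq_zero_iff.mp this]
  | succ n ih =>
    intro l
    constructor
    · intro h
      simp only [G, Finset.mem_biUnion, Finset.mem_image, Finset.mem_range] at h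
      obtain ⟨l', hl', p, hp, rfl⟩ := h
      obtain ⟨hm', hnp'⟩ := (ih l').mp hl'
      have hvnot : (n + 1) ∉ l' := by
        intro hmem
        have := mem_bound_of_double hm' hmem
        omega
      have hAB : l'.take p ++ l'.drop p = l' := List.take_append_drop p l'
      constructor
      · intro i
        rw [count_insG, hm' i]
        split_ifs <;> omega
      · have := noPat_insert (A := l'.take p) (B := l'.drop p)
          (by rw [hAB]; exact hvnot)
          (by rw [hAB]; intro x hx; have := mem_bound_of_double hm' hx; omega)
          (by rw [hAB]; exact hnp')
        exact this
    · rintro ⟨hm, hnp⟩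
      set v := n + 1 with hv
      have hvl : v ∈ l := by
        rw [← List.count_pos_iff, hm v, if_pos (by omega)]
        omega
      -- l = w ++ [v] with v ∈ w
      obtain ⟨u, r, hur, hvu⟩ := exists_first_split hvl
      have hbound : ∀ x ∈ l, x ≤ v := fun x hx => (mem_bound_of_double hm hx).2
      have hvr : v ∈ r := by
        have hc := hm v
        rw [if_pos (by omega)] at hc
        rw [hur, List.count_append, List.count_cons_self,
          List.count_eq_zero_of_not_mem hvu] at hc
        have : r.count v = 1 := by omega
        exact List.count_pos_iff.mp (by omega)
      obtain ⟨u2, r2, hur2, hvu2⟩ := exists_first_split hvr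
      have hr2 : r2 = [] := by
        rcases r2 with _ | ⟨y, r3⟩
        · rfl
        · exfalso
          refine hnp v y (hbound y (by rw [hur, hur2]; simp)) ?_
          rw [hur, hur2]
          have h1 : [v] <+ u ++ [v] := (List.singleton_sublist.mpr (by simp))
          have h2 : [v, y] <+ v :: u2 ++ v :: y :: r3 := by
            refine List.Sublist.trans ?_ (List.sublist_append_right _ _)
            exact (List.singleton_sublist.mpr (by simp)).cons₂ v
          have := h1.append h2
          simpa using this
      subst hr2
      -- l = (u ++ v :: u2) ++ [v]
      have hl : l = (u ++ v :: u2) ++ [v] := by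
        rw [hur, hur2]; simp
      have hvA : v ∈ u ++ v :: u2 := by simp
      obtain ⟨C, D, hCD, hvC⟩ := exists_first_split hvA
      have hcv : l.count v = C.count v + D.count v + 2 := by
        rw [hl, hCD]
        simp [List.count_append, List.count_cons]
        omega
      have hvD : v ∉ D := by
        intro hmem
        have hc := hm v
        rw [if_pos (by omega)] at hc
        have h1 : 0 < D.count v := List.count_pos_iff.mpr hmem
        have h2 : 0 < C.count v + D.count v := by omega
        omega
      have hvl' : v ∉ C ++ D := by
        simp only [List.mem_append]
        rintro (h | h)
        exacts [hvC h, hvD h]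
      have hm'' : IsDoubleMultiset n (C ++ D) := by
        intro i
        have hc := hm i
        have hcount : l.count i = (C ++ D).count i + if i = v then 2 else 0 := by
          rw [hl, hCD]
          simp [List.count_append, List.count_cons]
          split_ifs <;> omega
        rw [hcount] at hc
        by_cases hiv : i = v
        · rw [if_pos hiv] at hc
          rw [if_pos (by omega : 1 ≤ i ∧ i ≤ n + 1)] at hc
          rw [if_neg (by omega)]
          omega
        · rw [if_neg hiv] at hc
          split_ifs at hc ⊢ <;> omega
      have hnp'' : NoPat (C ++ D) := by
        have h1 : NoPat (C ++ v :: D) := by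
          rw [hl, hCD] at hnp
          exact noPat_of_append_right hnp
        exact noPat_middle h1
      have hlen' : (C ++ D).length = 2 * n := length_of_double hm''
      have hClen : C.length ≤ 2 * n := by
        have : C.length ≤ (C ++ D).length := by simp
        omega
      simp only [hv, G, Finset.mem_biUnion, Finset.mem_image, Finset.mem_range]
      refine ⟨C ++ D, (ih (C ++ D)).mpr ⟨hm'', hnp''⟩, C.length, by omega, ?_⟩
      unfold insG
      rw [List.take_left, List.drop_left]
      rw [hl, hCD]

lemma insG_inj {v : ℕ} {l l' : List ℕ} {p q : ℕ}
    (hv : v ∉ l) (hv' : v ∉ l') (hp : p ≤ l.length) (hq : q ≤ l'.length)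
    (h : insG v l p = insG v l' q) : l = l' ∧ p = q := by
  unfold insG at h
  have h2 : l.take p ++ v :: l.drop p = l'.take q ++ v :: l'.drop q := by
    exact List.append_inj_left' h rfl
  have hvp : v ∉ l.take p := fun hx => hv (List.mem_of_mem_take hx)
  have hvq : v ∉ l'.take q := fun hx => hv' (List.mem_of_mem_take hx)
  obtain ⟨ht, hd⟩ := middle_split_unique hvp hvq h2
  have hl : l = l' := by
    rw [← List.take_append_drop p l, ← List.take_append_drop q l', ht, hd]
  have hpq : p = q := by
    have h1 : (l.take p).length = p := by simp; omega
    have h2 : (l'.take q).length = q := by simp; omega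
    rw [← h1, ← h2, ht]
  exact ⟨hl, hpq⟩

lemma card_G : ∀ n : ℕ, (G n).card = Nat.doubleFactorial (2 * n - 1) := by
  intro n
  induction n with
  | zero => simp [G]
  | succ n ih =>
    have key : ∀ l ∈ G n, (n + 1) ∉ l ∧ l.length = 2 * n := by
      intro l hl
      obtain ⟨hm, _⟩ := (mem_G_iff n l).mp hl
      refine ⟨fun hmem => ?_, length_of_double hm⟩
      have := mem_bound_of_double hm hmem
      omega
    have hcard : (G (n + 1)).card = (G n).card * (2 * n + 1) := by
      show ((G n).biUnion fun l => (Finset.range (2 * n + 1)).image (insG (n + 1) l)).card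
        = (G n).card * (2 * n + 1)
      rw [Finset.card_biUnion]
      · rw [Finset.sum_congr rfl (g := fun _ => 2 * n + 1) ?_, Finset.sum_const, smul_eq_mul]
        intro l hl
        rw [Finset.card_image_of_injOn, Finset.card_range]
        intro p hp q hq hpq
        simp only [Finset.mem_coe, Finset.mem_range] at hp hq
        obtain ⟨h1, h2⟩ := key l hl
        exact (insG_inj h1 h1 (by omega) (by omega) hpq).2
      · intro l hl l' hl' hne
        rw [Function.onFun, Finset.disjoint_left]
        intro a ha ha'
        simp only [Finset.mem_image, Finset.mem_range] at ha ha'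
        obtain ⟨p, hp, hpa⟩ := ha
        obtain ⟨q, hq, hqa⟩ := ha'
        obtain ⟨h1, h2⟩ := key l hl
        obtain ⟨h1', h2'⟩ := key l' hl'
        exact hne (insG_inj h1 h1' (by omega) (by omega) (hpa.trans hqa.symm)).1
    rw [hcard, ih]
    rcases n with _ | m
    · simp [Nat.doubleFactorial]
    · have h1 : 2 * (m + 1 + 1) - 1 = (2 * (m + 1) - 1) + 2 := by omega
      rw [h1, Nat.doubleFactorial_add_two]
      have : 2 * (m + 1) - 1 + 2 = 2 * (m + 1) + 1 := by omega
      rw [this]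
      ring

theorem stmt5 (n : ℕ) (hn : 1 ≤ n) :
    Nat.card {l : List ℕ // IsGesselPerm n l}
      = Nat.doubleFactorial (2 * n - 1) := by
  have hset : {l : List ℕ | IsGesselPerm n l} = ↑(G n) := by
    ext l
    simp only [Set.mem_setOf_eq, Finset.coe_sort_coe, Finset.mem_coe]
    rw [mem_G_iff, gessel_iff]
  have : Nat.card {l : List ℕ // IsGesselPerm n l}
      = Set.ncard {l : List ℕ | IsGesselPerm n l} :=
    Nat.card_coe_set_eq _
  rw [this, hset, Set.ncard_coe_finset, card_G]
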